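/- Let $q$ be an odd prime power and let $GL_2^+(q)\subseteq GL_2(\mathbb{F}_q)$ be the subgroup of matrices whose determinant is a nonzero square. Let $G$ with $SL_2(\mathbb{F}_q)\subseteq G\subseteq GL_2(\mathbb{F}_q)$. Then $G$ acts transitively on the set of pairs $(v,w)$ of linearly independent vectors of $\mathbb{F}_q^2$ up to squares of scalars (precisely: for any two pairs of independent vectors $(v,w),(v',w')$ there is $\sigma\in G$ and squares $\lambda,\mu\in(\mathbb{F}_q^\times)^2$ with $\sigma v=\lambda v'$, $\sigma w=\mu w'$) if and only if $G\not\subseteq GL_2^+(q)$. -/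

import Mathlib

open Matrix

private lemma nonsq_mul {F : Type*} [Field F] [Fintype F] {x y : F}
    (hx : ¬IsSquare x) (hy : ¬IsSquare y) : IsSquare (x * y) := by
  classical
  have hx0 : x ≠ 0 := fun h => hx (h ▸ IsSquare.zero)
  have hy0 : y ≠ 0 := fun h => hy (h ▸ IsSquare.zero)
  have h1 : quadraticChar F x = -1 := quadraticChar_neg_one_iff_not_isSquare.mpr hx
  have h2 : quadraticChar F y = -1 := quadraticChar_neg_one_iff_not_isSquare.mpr hy
  have h3 : quadraticChar F (x * y) = 1 := by rw [_root_.map_mul, h1, h2]; ring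
  exact (quadraticChar_one_iff_isSquare (mul_ne_zero hx0 hy0)).mp h3

private lemma mem_of_det_one {F : Type*} [Field F]
    (G : Subgroup (GL (Fin 2) F))
    (hSL : ∀ A : Matrix.SpecialLinearGroup (Fin 2) F, Matrix.SpecialLinearGroup.toGL A ∈ G)
    (m : Matrix (Fin 2) (Fin 2) F) (hm : m.det = 1) :
    ∃ σ ∈ G, ((σ : GL (Fin 2) F) : Matrix (Fin 2) (Fin 2) F) = m :=
  ⟨Matrix.SpecialLinearGroup.toGL ⟨m, hm⟩, hSL _, rfl⟩

private lemma mem_of_det_eq {F : Type*} [Field F]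
    (G : Subgroup (GL (Fin 2) F))
    (hSL : ∀ A : Matrix.SpecialLinearGroup (Fin 2) F, Matrix.SpecialLinearGroup.toGL A ∈ G)
    (A : GL (Fin 2) F) (hA : A ∈ G)
    (m : Matrix (Fin 2) (Fin 2) F)
    (hm : m.det = ((A : Matrix (Fin 2) (Fin 2) F)).det) :
    ∃ σ ∈ G, ((σ : GL (Fin 2) F) : Matrix (Fin 2) (Fin 2) F) = m := by
  have hdet : IsUnit ((A : Matrix (Fin 2) (Fin 2) F)).det :=
    (Matrix.isUnit_iff_isUnit_det _).mp A.isUnit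
  have hdet0 : ((A : Matrix (Fin 2) (Fin 2) F)).det ≠ 0 := hdet.ne_zero
  have h1 : (((A : Matrix (Fin 2) (Fin 2) F))⁻¹ * m).det = 1 := by
    rw [Matrix.det_mul, Matrix.det_nonsing_inv, Ring.inverse_eq_inv', hm,
      inv_mul_cancel₀ hdet0]
  refine ⟨A * Matrix.SpecialLinearGroup.toGL ⟨_, h1⟩, mul_mem hA (hSL _), ?_⟩
  show (A : Matrix (Fin 2) (Fin 2) F) * (((A : Matrix (Fin 2) (Fin 2) F))⁻¹ * m) = m
  rw [← mul_assoc, Matrix.mul_nonsing_inv _ hdet, one_mul]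

private lemma construct {F : Type*} [Field F] (v w v' w' : Fin 2 → F)
    (h : LinearIndependent F ![v, w]) (a b : F) :
    ∃ m : Matrix (Fin 2) (Fin 2) F,
      m.det = a ^ 2 * b ^ 2 * (Matrix.of ![v', w']).det * ((Matrix.of ![v, w]).det)⁻¹ ∧
      m.mulVec v = a ^ 2 • v' ∧ m.mulVec w = b ^ 2 • w' := by
  have hP : IsUnit (Matrix.of ![v, w]) :=
    Matrix.linearIndependent_rows_iff_isUnit.mp h
  have hPt : IsUnit (Matrix.of ![v, w])ᵀ := (Matrix.isUnit_transpose _).mpr hP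
  have hPdet : IsUnit ((Matrix.of ![v, w])ᵀ).det := (Matrix.isUnit_iff_isUnit_det _).mp hPt
  set P : Matrix (Fin 2) (Fin 2) F := (Matrix.of ![v, w])ᵀ with hPdef
  set Q : Matrix (Fin 2) (Fin 2) F := (Matrix.of ![a ^ 2 • v', b ^ 2 • w'])ᵀ with hQdef
  refine ⟨Q * P⁻¹, ?_, ?_, ?_⟩
  · rw [Matrix.det_mul, Matrix.det_nonsing_inv, Ring.inverse_eq_inv']
    have hQd : Q.det = a ^ 2 * b ^ 2 * (Matrix.of ![v', w']).det := by
      rw [hQdef, Matrix.det_transpose]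
      simp [Matrix.det_fin_two, Pi.smul_apply, smul_eq_mul]
      ring
    have hPd : P.det = (Matrix.of ![v, w]).det := by rw [hPdef, Matrix.det_transpose]
    rw [hQd, hPd]
  · have hv : P *ᵥ Pi.single 0 1 = v := by
      ext i; fin_cases i <;> simp [hPdef, Matrix.mulVec_single, Matrix.vecHead, Matrix.vecTail]
    have : P⁻¹ *ᵥ v = Pi.single 0 1 := by
      rw [← hv, Matrix.mulVec_mulVec, Matrix.nonsing_inv_mul _ hPdet, Matrix.one_mulVec]
    rw [← Matrix.mulVec_mulVec, this]
    ext i; fin_cases i <;> simp [hQdef, Matrix.mulVec_single, Matrix.vecHead, Matrix.vecTail]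
  · have hw : P *ᵥ Pi.single 1 1 = w := by
      ext i; fin_cases i <;> simp [hPdef, Matrix.mulVec_single, Matrix.vecHead, Matrix.vecTail]
    have : P⁻¹ *ᵥ w = Pi.single 1 1 := by
      rw [← hw, Matrix.mulVec_mulVec, Matrix.nonsing_inv_mul _ hPdet, Matrix.one_mulVec]
    rw [← Matrix.mulVec_mulVec, this]
    ext i; fin_cases i <;> simp [hQdef, Matrix.mulVec_single, Matrix.vecHead, Matrix.vecTail]

theorem stmt14 {F : Type*} [Field F] [Fintype F] (hq : Odd (Fintype.card F))
    (G : Subgroup (GL (Fin 2) F))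
    (hSL : ∀ A : Matrix.SpecialLinearGroup (Fin 2) F,
      Matrix.SpecialLinearGroup.toGL A ∈ G) :
    (∀ v w v' w' : Fin 2 → F,
        LinearIndependent F ![v, w] → LinearIndependent F ![v', w'] →
        ∃ σ ∈ G, ∃ a b : F, a ≠ 0 ∧ b ≠ 0 ∧
          ((σ : GL (Fin 2) F) : Matrix (Fin 2) (Fin 2) F).mulVec v = a ^ 2 • v' ∧
          ((σ : GL (Fin 2) F) : Matrix (Fin 2) (Fin 2) F).mulVec w = b ^ 2 • w') ↔
      ¬ (∀ A ∈ G, IsSquare (((A : GL (Fin 2) F) : Matrix (Fin 2) (Fin 2) F).det)) := by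
  have hchar : ringChar F ≠ 2 := by
    intro h
    have := FiniteField.even_card_iff_char_two.mp h
    rw [Nat.odd_iff] at hq
    omega
  constructor
  · intro htrans hAll
    classical
    obtain ⟨c, hc⟩ := FiniteField.exists_nonsquare hchar
    have hc0 : c ≠ 0 := fun h => hc (h ▸ IsSquare.zero)
    have hind1 : LinearIndependent F ![Pi.single 0 1, (Pi.single 1 1 : Fin 2 → F)] := by
      rw [linearIndependent_fin2]
      constructor
      · simp only [Matrix.cons_val_one, Matrix.head_cons]
        intro h
        have := congrFun h 1
        simp [Pi.single_apply] at this
      · intro x h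
        have := congrFun h 0
        simp [Pi.single_apply] at this
    have hind2 : LinearIndependent F ![Pi.single 0 1, c • (Pi.single 1 1 : Fin 2 → F)] := by
      rw [linearIndependent_fin2]
      constructor
      · simp only [Matrix.cons_val_one, Matrix.head_cons]
        intro h
        have := congrFun h 1
        simp [Pi.single_apply, hc0] at this
      · intro x h
        have := congrFun h 0
        simp [Pi.single_apply] at this
    obtain ⟨σ, hσG, a, b, ha, hb, h1, h2⟩ :=
      htrans (Pi.single 0 1) (Pi.single 1 1) (Pi.single 0 1)
        (c • (Pi.single 1 1 : Fin 2 → F)) hind1 hind2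
    have h00 : ((σ : GL (Fin 2) F) : Matrix (Fin 2) (Fin 2) F) 0 0 = a ^ 2 := by
      have := congrFun h1 0
      simpa [Matrix.mulVec_single, Pi.single_apply] using this
    have h10 : ((σ : GL (Fin 2) F) : Matrix (Fin 2) (Fin 2) F) 1 0 = 0 := by
      have := congrFun h1 1
      simpa [Matrix.mulVec_single, Pi.single_apply] using this
    have h01 : ((σ : GL (Fin 2) F) : Matrix (Fin 2) (Fin 2) F) 0 1 = 0 := by
      have := congrFun h2 0
      simpa [Matrix.mulVec_single, Pi.single_apply] using this
    have h11 : ((σ : GL (Fin 2) F) : Matrix (Fin 2) (Fin 2) F) 1 1 = b ^ 2 * c := by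
      have := congrFun h2 1
      simpa [Matrix.mulVec_single, Pi.single_apply] using this
    have hdet : ((σ : GL (Fin 2) F) : Matrix (Fin 2) (Fin 2) F).det = a ^ 2 * (b ^ 2 * c) := by
      rw [Matrix.det_fin_two, h00, h10, h01, h11]; ring
    obtain ⟨r, hr⟩ := hAll σ hσG
    rw [hdet] at hr
    apply hc
    refine ⟨r * (a * b)⁻¹, ?_⟩
    field_simp
    linear_combination hr
  · intro hNot v w v' w' hvw hv'w'
    classical
    push_neg at hNot
    obtain ⟨A, hAG, hAns⟩ := hNot
    have hvwdet : (Matrix.of ![v, w]).det ≠ 0 := by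
      have := Matrix.linearIndependent_rows_iff_isUnit.mp
        (show LinearIndependent F (fun i => (Matrix.of ![v, w]) i) from hvw)
      exact ((Matrix.isUnit_iff_isUnit_det _).mp this).ne_zero
    have hv'w'det : (Matrix.of ![v', w']).det ≠ 0 := by
      have := Matrix.linearIndependent_rows_iff_isUnit.mp
        (show LinearIndependent F (fun i => (Matrix.of ![v', w']) i) from hv'w')
      exact ((Matrix.isUnit_iff_isUnit_det _).mp this).ne_zero
    set D : F := (Matrix.of ![v', w']).det * ((Matrix.of ![v, w]).det)⁻¹ with hDdef
    have hD0 : D ≠ 0 := mul_ne_zero hv'w'det (inv_ne_zero hvwdet)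
    by_cases hsq : IsSquare D
    · obtain ⟨r, hr⟩ := hsq
      have hr0 : r ≠ 0 := by rintro rfl; simp at hr; exact hD0 hr
      obtain ⟨m, hmdet, hmv, hmw⟩ := construct v w v' w' hvw r⁻¹ 1
      have hm1 : m.det = 1 := by
        rw [hmdet, mul_assoc, ← hDdef, hr]
        field_simp
      obtain ⟨σ, hσG, hσm⟩ := mem_of_det_one G hSL m hm1
      exact ⟨σ, hσG, r⁻¹, 1, inv_ne_zero hr0, one_ne_zero, by rw [hσm]; exact hmv,
        by rw [hσm]; exact hmw⟩
    · have hDinv : ¬IsSquare D⁻¹ := by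
        rintro ⟨s, hs⟩
        exact hsq ⟨s⁻¹, by rw [← inv_inv D, hs]; simp [mul_inv]⟩
      have : IsSquare (D⁻¹ * ((A : GL (Fin 2) F) : Matrix (Fin 2) (Fin 2) F).det) :=
        nonsq_mul hDinv hAns
      obtain ⟨r, hr⟩ := this
      have hAdet0 : ((A : GL (Fin 2) F) : Matrix (Fin 2) (Fin 2) F).det ≠ 0 :=
        ((Matrix.isUnit_iff_isUnit_det _).mp A.isUnit).ne_zero
      have hr0 : r ≠ 0 := by
        rintro rfl
        rw [zero_mul] at hr
        exact mul_ne_zero (inv_ne_zero hD0) hAdet0 hr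
      obtain ⟨m, hmdet, hmv, hmw⟩ := construct v w v' w' hvw r 1
      have hm1 : m.det = ((A : GL (Fin 2) F) : Matrix (Fin 2) (Fin 2) F).det := by
        rw [hmdet, mul_assoc, ← hDdef]
        have : ((A : GL (Fin 2) F) : Matrix (Fin 2) (Fin 2) F).det = D * (r * r) := by
          rw [← hr, mul_inv_cancel_left₀ hD0]
        rw [this]; ring
      obtain ⟨σ, hσG, hσm⟩ := mem_of_det_eq G hSL A hAG m hm1
      exact ⟨σ, hσG, r, 1, hr0, one_ne_zero, by rw [hσm]; exact hmv,
        by rw [hσm]; exact hmw⟩
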